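/- For λ ∈ ℂ∖ℝ with M₊(λ) = -1/λ + 1/√(-λ) and M₋(λ) = -1/λ - 1/√λ, the following resolvent-type bound holds: 4·|Im(-1/λ)| / (|Im λ|·|1/√(-λ) + 1/√λ|) ≤ 2√2/|λ|^{3/2}. -/

import Mathlib

/-- Branch of `√(-z)` holomorphic on `ℂ ∖ [0,∞)`, positive on `(-∞,0)`. -/
noncomputable def sqrtNeg (z : ℂ) : ℂ := Complex.exp (Complex.log (-z) / 2)

/-- Principal branch of `√z`, holomorphic on `ℂ ∖ (-∞,0]`, positive on `(0,∞)`. -/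
noncomputable def sqrtP (z : ℂ) : ℂ := Complex.exp (Complex.log z / 2)

/-- For `λ ∈ ℂ∖ℝ`:  `4·|Im(-1/λ)| / (|Im λ|·|1/√(-λ)+1/√λ|) ≤ 2√2/|λ|^{3/2}`. -/
theorem stmt_3 (z : ℂ) (hz : z.im ≠ 0) :
    4 * |(-1 / z).im| / (|z.im| * ‖1 / sqrtNeg z + 1 / sqrtP z‖) ≤
      2 * Real.sqrt 2 / ‖z‖ ^ ((3 : ℝ) / 2) := by
  have hz0 : z ≠ 0 := fun h => hz (by simp [h])
  set r := ‖z‖ with hr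
  have hr0 : 0 < r := by simpa [hr] using norm_pos_iff.mpr hz0
  set b := sqrtP z with hb
  set a := sqrtNeg z with ha
  have hb0 : b ≠ 0 := Complex.exp_ne_zero _
  have habs_b : ‖b‖ = r ^ ((1:ℝ)/2) := by
    rw [hb, sqrtP, Complex.norm_exp, Real.rpow_def_of_pos hr0]
    congr 1
    have : (Complex.log z / 2).re = (Complex.log z).re / 2 := by
      simp [Complex.div_re, Complex.normSq]
    rw [this, Complex.log_re]
    ring
  have hb2 : b ^ 2 = z := by
    rw [hb, sqrtP, sq, ← Complex.exp_add]
    rw [show Complex.log z / 2 + Complex.log z / 2 = Complex.log z by ring]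
    exact Complex.exp_log hz0
  have ha2 : a ^ 2 = -z := by
    rw [ha, sqrtNeg, sq, ← Complex.exp_add]
    rw [show Complex.log (-z) / 2 + Complex.log (-z) / 2 = Complex.log (-z) by ring]
    exact Complex.exp_log (neg_ne_zero.mpr hz0)
  have hcases : a = Complex.I * b ∨ a = -(Complex.I * b) := by
    have h : (a - Complex.I * b) * (a + Complex.I * b) = 0 := by
      have : a ^ 2 + b ^ 2 = 0 := by rw [ha2, hb2]; ring
      linear_combination this - b ^ 2 * Complex.I_sq
    rcases mul_eq_zero.mp h with h1 | h1
    · left; linear_combination h1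
    · right; linear_combination h1
  have key : ‖1/a + 1/b‖ = Real.sqrt 2 / ‖b‖ := by
    have h2 : ‖1 + Complex.I‖ = Real.sqrt 2 := by
      rw [Complex.norm_def, Complex.normSq_apply]
      norm_num
    have h2' : ‖1 - Complex.I‖ = Real.sqrt 2 := by
      rw [Complex.norm_def, Complex.normSq_apply]
      norm_num
    rcases hcases with h1 | h1
    · have ha0 : a ≠ 0 := by rw [h1]; simp [hb0, Complex.I_ne_zero]
      have : 1/a + 1/b = (1 + Complex.I) / (Complex.I * b) := by
        rw [h1]; field_simp
      rw [this, norm_div, h2, norm_mul, Complex.norm_I, one_mul]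
    · have ha0 : a ≠ 0 := by rw [h1]; simp [hb0, Complex.I_ne_zero]
      have : 1/a + 1/b = (1 - Complex.I) / (-(Complex.I * b)) := by
        rw [h1]; field_simp
        ring_nf
      rw [this, norm_div, h2', norm_neg, norm_mul, Complex.norm_I, one_mul]
  have him : |(-1 / z).im| = |z.im| / r ^ 2 := by
    have : (-1 / z).im = z.im / Complex.normSq z := by
      rw [neg_div, Complex.neg_im, one_div, Complex.inv_im]
      ring
    rw [this, Complex.normSq_eq_norm_sq, ← hr, abs_div, abs_of_nonneg (sq_nonneg r)]
  rw [him, key, habs_b]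
  set s := |z.im| with hs
  have hs0 : 0 < s := abs_pos.mpr hz
  have hsqrt2 : (0:ℝ) < Real.sqrt 2 := by positivity
  have hu : (0:ℝ) < r ^ ((1:ℝ)/2) := Real.rpow_pos_of_pos hr0 _
  have hv : (0:ℝ) < r ^ ((3:ℝ)/2) := Real.rpow_pos_of_pos hr0 _
  have huv : r ^ ((1:ℝ)/2) * r ^ ((3:ℝ)/2) = r ^ 2 := by
    rw [← Real.rpow_add hr0]
    norm_num
  have h22 : Real.sqrt 2 * Real.sqrt 2 = 2 := Real.mul_self_sqrt (by norm_num)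
  have heq : 4 * (s / r ^ 2) / (s * (Real.sqrt 2 / r ^ ((1:ℝ)/2))) =
      2 * Real.sqrt 2 / r ^ ((3:ℝ)/2) := by
    field_simp [hs0.ne', hu.ne', hv.ne', hsqrt2.ne', hr0.ne']
    linear_combination 4*huv - 2*r^2*h22
  rw [heq]
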